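/- arXiv:0907.1122 — 5 statements merged into one kernel-verified Lean document; each statement's English description precedes it below -/
import Mathlib

section
/- Let n ≥ 2 and 1 ≤ k ≤ n, and let 0 ≤ m ≤ k-1. If a₁, b₁, a₂, b₂ are nonnegative integers with a₁·n + b₁·(n-1) + m = (2n-k)(n-1) = a₂·n + b₂·(n-1) + m, and additionally a₁ ≥ 1 when m = 0, a₂ ≥ 1 when m = 0, then a₁ = a₂ and b₁ = b₂. -/
lemma key_D1 (d k m a b : ℕ) (hd : 1 ≤ d) (hk1 : 1 ≤ k) (hkn : k ≤ d + 1)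
    (hm : m ≤ k - 1)
    (h : a * (d + 1) + b * d + m = (2 * (d + 1) - k) * d)
    (ha : m = 0 → 1 ≤ a) : a + m = d := by
  have hk : 2 * (d + 1) - k = 2 * d + 2 - k := by omega
  rw [hk] at h
  have hle : (a + b) * d ≤ (2 * d + 2 - k) * d := by nlinarith
  have hab : a + b ≤ 2 * d + 2 - k := le_of_mul_le_mul_right hle hd
  set c := 2 * d + 2 - k - (a + b) with hc
  have hcd : a + m = c * d := by
    have : (a + b) * d + (a + m) = (2 * d + 2 - k) * d := by nlinarith
    have hcs : c * d = (2 * d + 2 - k) * d - (a + b) * d := by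
      rw [hc, Nat.sub_mul]
    omega
  have ham : 1 ≤ a + m := by omega
  rcases Nat.lt_or_ge c 2 with hc2 | hc2
  · interval_cases c <;> omega
  · exfalso
    have h2d : 2 * d ≤ a + m := by
      calc 2 * d ≤ c * d := by nlinarith
        _ = a + m := hcd.symm
    have hmk : m + 1 ≤ k := by omega
    obtain ⟨e, he, hek⟩ : ∃ e, 2 * d + 2 - k = e ∧ e + k = 2 * d + 2 := ⟨_, rfl, by omega⟩
    rw [he] at h
    nlinarith [h, h2d, hmk, hd, Nat.mul_le_mul_right d h2d, Nat.mul_le_mul_right d hmk]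

/-- Any two decompositions of `(2n-k)(n-1) - m` into cycles of lengths `n` and `n-1`
(with at least one `n`-cycle when `m = 0`) use the same numbers of each length. -/
theorem unique_decomposition_D1 (n k m : ℕ) (hn : 2 ≤ n) (hk1 : 1 ≤ k) (hkn : k ≤ n)
    (hm : m ≤ k - 1) (a₁ b₁ a₂ b₂ : ℕ)
    (h₁ : a₁ * n + b₁ * (n - 1) + m = (2 * n - k) * (n - 1))
    (h₂ : a₂ * n + b₂ * (n - 1) + m = (2 * n - k) * (n - 1))
    (ha₁ : m = 0 → 1 ≤ a₁) (ha₂ : m = 0 → 1 ≤ a₂) :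
    a₁ = a₂ ∧ b₁ = b₂ := by
  obtain ⟨d, rfl⟩ : ∃ d, n = d + 1 := ⟨n - 1, by omega⟩
  have hd : 1 ≤ d := by omega
  simp only [Nat.add_sub_cancel] at h₁ h₂
  have k₁ := key_D1 d k m a₁ b₁ hd hk1 hkn hm h₁ ha₁
  have k₂ := key_D1 d k m a₂ b₂ hd hk1 hkn hm h₂ ha₂
  have ha : a₁ = a₂ := by omega
  subst ha
  have : b₁ * d = b₂ * d := by omega
  exact ⟨rfl, Nat.eq_of_mul_eq_mul_right hd this⟩
end

section
/- Let n ≥ 2 and 1 ≤ k ≤ n. Suppose a₁, b₁, a₂, b₂ are nonnegative integers and m is an integer with either m = n-1 or 0 ≤ m ≤ k-2, such that a₁·n + b₁·(n-1) + m = (2n-k)(n-1) - 1 = a₂·n + b₂·(n-1) + m. Then b₁ = b₂ (and hence a₁ = a₂). -/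
lemma unique_decomposition_D2_aux (n k : ℕ) (hn : 2 ≤ n) (hk1 : 1 ≤ k) (hkn : k ≤ n)
    (m : ℤ) (hm : m = (n : ℤ) - 1 ∨ (0 ≤ m ∧ m ≤ (k : ℤ) - 2)) (a₁ b₁ a₂ b₂ : ℕ)
    (h₁ : (a₁ : ℤ) * n + (b₁ : ℤ) * ((n : ℤ) - 1) + m =
      (2 * (n : ℤ) - k) * ((n : ℤ) - 1) - 1)
    (h₂ : (a₂ : ℤ) * n + (b₂ : ℤ) * ((n : ℤ) - 1) + m =
      (2 * (n : ℤ) - k) * ((n : ℤ) - 1) - 1)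
    (hle : b₁ ≤ b₂) : b₁ = b₂ := by
  by_contra hne
  have hnz : (0:ℤ) < n := by exact_mod_cast Nat.lt_of_lt_of_le Nat.zero_lt_two hn
  have hn2 : (2:ℤ) ≤ n := by exact_mod_cast hn
  have hkn' : (k:ℤ) ≤ n := by exact_mod_cast hkn
  have hk1' : (1:ℤ) ≤ k := by exact_mod_cast hk1
  have hblt : (b₁:ℤ) < b₂ := by
    have : b₁ < b₂ := lt_of_le_of_ne hle hne
    exact_mod_cast this
  -- n divides b₂ - b₁
  have hdvd : (n:ℤ) ∣ ((b₂:ℤ) - b₁) := by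
    have hcop : IsCoprime (n:ℤ) ((n:ℤ) - 1) := ⟨1, -1, by ring⟩
    have h : (n:ℤ) ∣ ((b₂:ℤ) - b₁) * ((n:ℤ) - 1) := ⟨(a₁:ℤ) - a₂, by linarith⟩
    exact hcop.dvd_of_dvd_mul_right h
  have hgap : (b₁:ℤ) + n ≤ b₂ := by
    have := Int.le_of_dvd (by linarith) hdvd
    linarith
  -- m ≥ 0 in both cases
  have hm0 : 0 ≤ m := by
    rcases hm with h | ⟨h, _⟩
    · linarith
    · exact h
  -- nonnegativity of a's
  have ha₁ : (0:ℤ) ≤ a₁ := Int.natCast_nonneg _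
  have ha₂ : (0:ℤ) ≤ a₂ := Int.natCast_nonneg _
  -- bound: b₂ ≤ 2n - k - 1
  have hb₂ : (b₂:ℤ) ≤ 2 * n - k - 1 := by
    by_contra h
    push_neg at h
    have h' : 2 * (n:ℤ) - k ≤ b₂ := by linarith
    have : (2 * (n:ℤ) - k) * ((n:ℤ) - 1) ≤ (b₂:ℤ) * ((n:ℤ) - 1) := by
      apply mul_le_mul_of_nonneg_right h' (by linarith)
    nlinarith
  have hb₁ : (b₁:ℤ) ≤ n - k - 1 := by linarith
  -- residue: n ∣ m + 1 - k - b₁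
  have hres : (n:ℤ) ∣ (m + 1 - k - b₁) :=
    ⟨2 * n - 2 - k - a₁ - b₁, by linarith [h₁]; ⟩
  obtain ⟨c, hc⟩ := hres
  have hb₁0 : (0:ℤ) ≤ b₁ := Int.natCast_nonneg _
  rcases hm with h | ⟨h0, h2⟩
  · -- m = n - 1: d = n - k - b₁ with 0 < d < n
    have hd1 : 0 < m + 1 - k - b₁ := by rw [h]; linarith
    have hd2 : m + 1 - k - b₁ < n := by rw [h]; linarith
    rw [hc] at hd1 hd2
    rcases lt_trichotomy c 0 with hcs | hcs | hcs
    · have : (n:ℤ) * c < 0 := mul_neg_of_pos_of_neg hnz hcs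
      linarith
    · rw [hcs, mul_zero] at hd1; linarith
    · have h1c : (1:ℤ) ≤ c := hcs
      have : (n:ℤ) * 1 ≤ n * c := mul_le_mul_of_nonneg_left h1c (le_of_lt hnz)
      linarith
  · -- 0 ≤ m ≤ k-2: d < 0, d > -n
    have hd1 : m + 1 - k - b₁ < 0 := by linarith
    have hd2 : -(n:ℤ) < m + 1 - k - b₁ := by linarith
    rw [hc] at hd1 hd2
    rcases lt_trichotomy c 0 with hcs | hcs | hcs
    · have h1c : c ≤ -1 := by linarith
      have : (n:ℤ) * c ≤ n * (-1) := mul_le_mul_of_nonneg_left h1c (le_of_lt hnz)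
      linarith
    · rw [hcs, mul_zero] at hd1; linarith
    · have : (0:ℤ) < n * c := mul_pos hnz hcs
      linarith

/-- Any two decompositions of `(2n-k)(n-1) - 1 - m` into cycles of lengths `n` and
`n-1`, for `m = n-1` or `0 ≤ m ≤ k-2`, use the same numbers of each length. -/
theorem unique_decomposition_D2 (n k : ℕ) (hn : 2 ≤ n) (hk1 : 1 ≤ k) (hkn : k ≤ n)
    (m : ℤ) (hm : m = (n : ℤ) - 1 ∨ (0 ≤ m ∧ m ≤ (k : ℤ) - 2)) (a₁ b₁ a₂ b₂ : ℕ)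
    (h₁ : (a₁ : ℤ) * n + (b₁ : ℤ) * ((n : ℤ) - 1) + m =
      (2 * (n : ℤ) - k) * ((n : ℤ) - 1) - 1)
    (h₂ : (a₂ : ℤ) * n + (b₂ : ℤ) * ((n : ℤ) - 1) + m =
      (2 * (n : ℤ) - k) * ((n : ℤ) - 1) - 1) :
    b₁ = b₂ ∧ a₁ = a₂ := by
  have hb : b₁ = b₂ := by
    rcases le_total b₁ b₂ with h | h
    · exact unique_decomposition_D2_aux n k hn hk1 hkn m hm a₁ b₁ a₂ b₂ h₁ h₂ h
    · exact (unique_decomposition_D2_aux n k hn hk1 hkn m hm a₂ b₂ a₁ b₁ h₂ h₁ h).symm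
  refine ⟨hb, ?_⟩
  subst hb
  have hnz : (0:ℤ) < n := by exact_mod_cast Nat.lt_of_lt_of_le Nat.zero_lt_two hn
  have : (a₁:ℤ) * n = (a₂:ℤ) * n := by linarith
  have : (a₁:ℤ) = a₂ := mul_right_cancel₀ (ne_of_gt hnz) this
  exact_mod_cast this
end

section
/- Let S be a primitive non-powerful signed digraph of order n with underlying digraph D, and suppose there is a pair of SSSD walks of length r from a vertex u to a vertex v. Then for every 1 ≤ k ≤ n, L(S,k) ≤ F(D,k) + d(D) + r, where d(D) is the diameter of D. -/
/-- There is a walk of length `l` from `u` to `v` in the digraph with arc relation `A`. -/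
def HasWalk {n : ℕ} (A : Fin n → Fin n → Prop) (u v : Fin n) (l : ℕ) : Prop :=
  ∃ f : ℕ → Fin n, f 0 = u ∧ f l = v ∧ ∀ i < l, A (f i) (f (i + 1))

/-- A digraph is primitive if for some `p > 0` every ordered pair of vertices is
joined by a walk of length exactly `p`. -/
def Primitive {n : ℕ} (A : Fin n → Fin n → Prop) : Prop :=
  ∃ p, 0 < p ∧ ∀ u v : Fin n, HasWalk A u v p

/-- `f` is the vertex sequence of a walk of length `l` from `u` to `v` in `A`. -/
def IsWalkSeq {n : ℕ} (A : Fin n → Fin n → Prop) (f : ℕ → Fin n) (u v : Fin n) (l : ℕ) : Prop :=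
  f 0 = u ∧ f l = v ∧ ∀ i < l, A (f i) (f (i + 1))

/-- The sign of (the length-`l` initial part of) the walk with vertex sequence `f`
in the signed digraph `S`. -/
def walkSign {n : ℕ} (S : Fin n → Fin n → ℤ) (f : ℕ → Fin n) (l : ℕ) : ℤ :=
  ∏ i ∈ Finset.range l, S (f i) (f (i + 1))

/-- The underlying digraph of a signed digraph `S`. -/
def Underlying {n : ℕ} (S : Fin n → Fin n → ℤ) : Fin n → Fin n → Prop :=
  fun u v => S u v ≠ 0

/-- All entries of `S` are in `{0, 1, -1}`: `S` is a sign pattern / signed digraph. -/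
def SignPattern {n : ℕ} (S : Fin n → Fin n → ℤ) : Prop :=
  ∀ u v, S u v = 0 ∨ S u v = 1 ∨ S u v = -1

/-- There is a pair of SSSD walks of length `l` from `u` to `v`: two walks with the
same endpoints and length but different signs. -/
def HasSSSD {n : ℕ} (S : Fin n → Fin n → ℤ) (u v : Fin n) (l : ℕ) : Prop :=
  ∃ f g : ℕ → Fin n, IsWalkSeq (Underlying S) f u v l ∧ IsWalkSeq (Underlying S) g u v l ∧
    walkSign S f l ≠ walkSign S g l

/-- A signed digraph is non-powerful iff it contains a pair of SSSD walks. -/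
def NonPowerful {n : ℕ} (S : Fin n → Fin n → ℤ) : Prop :=
  ∃ u v l, HasSSSD S u v l

/-- `exp_D(X)`: the least `p` such that every vertex is reachable from some vertex
of `X` by a walk of length exactly `p`. -/
noncomputable def setExp {n : ℕ} (A : Fin n → Fin n → Prop) (X : Finset (Fin n)) : ℕ :=
  sInf {p | ∀ v, ∃ x ∈ X, HasWalk A x v p}

/-- `F(D,k)`: the `k`th upper multiexponent. -/
noncomputable def upperMultiexp {n : ℕ} (A : Fin n → Fin n → Prop) (k : ℕ) : ℕ :=
  sSup {e | ∃ X : Finset (Fin n), X.card = k ∧ setExp A X = e}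

/-- `l_S(X)`: the least `p` such that every vertex admits a pair of SSSD walks of
length `p` from some vertex of `X`. -/
noncomputable def setBase {n : ℕ} (S : Fin n → Fin n → ℤ) (X : Finset (Fin n)) : ℕ :=
  sInf {p | ∀ v, ∃ x ∈ X, HasSSSD S x v p}

/-- `L(S,k)`: the `k`th upper base. -/
noncomputable def upperBase {n : ℕ} (S : Fin n → Fin n → ℤ) (k : ℕ) : ℕ :=
  sSup {e | ∃ X : Finset (Fin n), X.card = k ∧ setBase S X = e}

/-- Distance from `u` to `v` in the digraph `A`. -/
noncomputable def ddist {n : ℕ} (A : Fin n → Fin n → Prop) (u v : Fin n) : ℕ :=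
  sInf {l | HasWalk A u v l}

/-- Diameter of the digraph `A`. -/
noncomputable def diam {n : ℕ} (A : Fin n → Fin n → Prop) : ℕ :=
  sSup {d | ∃ u v : Fin n, ddist A u v = d}

/-- `f` is the vertex sequence of a cycle of length `p` in `A`: a closed walk of
length `p` whose first `p` vertices are pairwise distinct. -/
def IsCycleSeq {n : ℕ} (A : Fin n → Fin n → Prop) (f : ℕ → Fin n) (p : ℕ) : Prop :=
  0 < p ∧ f p = f 0 ∧ (∀ i < p, A (f i) (f (i + 1))) ∧
    ∀ i < p, ∀ j < p, f i = f j → i = j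

/-- The digraph `D₁` on `{1,…,n}` (vertex `i` is index `i-1`): the Hamiltonian cycle
`1→2→⋯→n→1` together with the extra arc `(n-1)→1`. -/
def D1 (n : ℕ) : Fin n → Fin n → Prop := fun u v =>
  (v.val = u.val + 1) ∨ (u.val = n - 1 ∧ v.val = 0) ∨ (u.val = n - 2 ∧ v.val = 0)

/-- The digraph `D₂`: `D₁` together with the extra arc `(n)→2`. -/
def D2 (n : ℕ) : Fin n → Fin n → Prop := fun u v =>
  D1 n u v ∨ (u.val = n - 1 ∧ v.val = 1)

/-- Isomorphism of digraphs on the same vertex set `Fin n`. -/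
def DigraphIso {n : ℕ} (A B : Fin n → Fin n → Prop) : Prop :=
  ∃ e : Fin n ≃ Fin n, ∀ u v, A u v ↔ B (e u) (e v)

/-- Concatenation of walk vertex sequences. -/
def wconcat {n : ℕ} (f g : ℕ → Fin n) (l₁ : ℕ) : ℕ → Fin n :=
  fun i => if i < l₁ then f i else g (i - l₁)

lemma isWalkSeq_wconcat {n : ℕ} {A : Fin n → Fin n → Prop} {f g : ℕ → Fin n}
    {a b c : Fin n} {l₁ l₂ : ℕ} (hf : IsWalkSeq A f a b l₁) (hg : IsWalkSeq A g b c l₂) :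
    IsWalkSeq A (wconcat f g l₁) a c (l₁ + l₂) := by
  obtain ⟨hf0, hfl, hfa⟩ := hf
  obtain ⟨hg0, hgl, hga⟩ := hg
  refine ⟨?_, ?_, ?_⟩
  · by_cases h : 0 < l₁
    · simp [wconcat, h, hf0]
    · have : l₁ = 0 := by omega
      subst this
      simpa [wconcat, hg0] using hfl.symm.trans hf0
  · by_cases h : l₁ + l₂ < l₁
    · omega
    · simp only [wconcat, if_neg h, Nat.add_sub_cancel_left, hgl]
  · intro i hi
    by_cases h1 : i < l₁
    · by_cases h2 : i + 1 < l₁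
      · simpa [wconcat, h1, h2] using hfa i h1
      · have he : i + 1 = l₁ := by omega
        have : g (i + 1 - l₁) = f (i + 1) := by
          rw [he]; simp [hg0, ← hfl]
        simpa [wconcat, h1, h2, this, show g 0 = f (i + 1) by rw [he, hg0, hfl]] using hfa i h1
    · have h2 : ¬ i + 1 < l₁ := by omega
      have he : i + 1 - l₁ = (i - l₁) + 1 := by omega
      have := hga (i - l₁) (by omega)
      simpa [wconcat, h1, h2, he] using this

lemma walkSign_wconcat {n : ℕ} (S : Fin n → Fin n → ℤ) {f g : ℕ → Fin n} {l₁ : ℕ}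
    (hfg : f l₁ = g 0) (l₂ : ℕ) :
    walkSign S (wconcat f g l₁) (l₁ + l₂) = walkSign S f l₁ * walkSign S g l₂ := by
  unfold walkSign
  rw [Finset.prod_range_add]
  congr 1
  · refine Finset.prod_congr rfl fun i hi => ?_
    have h1 : i < l₁ := Finset.mem_range.mp hi
    by_cases h2 : i + 1 < l₁
    · simp [wconcat, h1, h2]
    · have he : i + 1 = l₁ := by omega
      have hgv : g (i + 1 - l₁) = f (i + 1) := by rw [he]; simp [← hfg]
      simp [wconcat, h1, h2, hgv, show g 0 = f (i + 1) by rw [he, ← hfg]]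
  · refine Finset.prod_congr rfl fun i _ => ?_
    have h1 : ¬ l₁ + i < l₁ := by omega
    have h2 : ¬ l₁ + i + 1 < l₁ := by omega
    have e1 : l₁ + i - l₁ = i := by omega
    have e2 : l₁ + i + 1 - l₁ = i + 1 := by omega
    simp [wconcat, h1, h2, e1, e2]

lemma walkSign_ne_zero {n : ℕ} {S : Fin n → Fin n → ℤ} {f : ℕ → Fin n} {a b : Fin n} {l : ℕ}
    (hf : IsWalkSeq (Underlying S) f a b l) : walkSign S f l ≠ 0 := by
  unfold walkSign
  rw [Finset.prod_ne_zero_iff]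
  intro i hi
  exact hf.2.2 i (Finset.mem_range.mp hi)

lemma hasSSSD_concat {n : ℕ} {S : Fin n → Fin n → ℤ} {x u v w : Fin n} {l₁ r l₂ : ℕ}
    (h1 : HasWalk (Underlying S) x u l₁) (h2 : HasSSSD S u v r)
    (h3 : HasWalk (Underlying S) v w l₂) : HasSSSD S x w (l₁ + r + l₂) := by
  obtain ⟨f1, hf1⟩ := h1
  obtain ⟨f, g, hf, hg, hsign⟩ := h2
  obtain ⟨f3, hf3⟩ := h3
  have hFm : IsWalkSeq (Underlying S) (wconcat f f3 r) u w (r + l₂) :=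
    isWalkSeq_wconcat hf hf3
  have hGm : IsWalkSeq (Underlying S) (wconcat g f3 r) u w (r + l₂) :=
    isWalkSeq_wconcat hg hf3
  have hF : IsWalkSeq (Underlying S) (wconcat f1 (wconcat f f3 r) l₁) x w (l₁ + (r + l₂)) :=
    isWalkSeq_wconcat hf1 hFm
  have hG : IsWalkSeq (Underlying S) (wconcat f1 (wconcat g f3 r) l₁) x w (l₁ + (r + l₂)) :=
    isWalkSeq_wconcat hf1 hGm
  have hs1 : walkSign S f1 l₁ ≠ 0 := walkSign_ne_zero hf1
  have hs3 : walkSign S f3 l₂ ≠ 0 := walkSign_ne_zero hf3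
  have eF : walkSign S (wconcat f1 (wconcat f f3 r) l₁) (l₁ + (r + l₂)) =
      walkSign S f1 l₁ * (walkSign S f r * walkSign S f3 l₂) := by
    rw [walkSign_wconcat S (by rw [hf1.2.1, hFm.1]) (r + l₂),
      walkSign_wconcat S (by rw [hf.2.1, hf3.1]) l₂]
  have eG : walkSign S (wconcat f1 (wconcat g f3 r) l₁) (l₁ + (r + l₂)) =
      walkSign S f1 l₁ * (walkSign S g r * walkSign S f3 l₂) := by
    rw [walkSign_wconcat S (by rw [hf1.2.1, hGm.1]) (r + l₂),
      walkSign_wconcat S (by rw [hg.2.1, hf3.1]) l₂]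
  have hne : walkSign S (wconcat f1 (wconcat f f3 r) l₁) (l₁ + (r + l₂)) ≠
      walkSign S (wconcat f1 (wconcat g f3 r) l₁) (l₁ + (r + l₂)) := by
    rw [eF, eG]
    intro h
    apply hsign
    have h' := mul_left_cancel₀ hs1 h
    exact mul_right_cancel₀ hs3 h'
  rw [show l₁ + r + l₂ = l₁ + (r + l₂) by omega]
  exact ⟨_, _, hF, hG, hne⟩

lemma cover_extend {n : ℕ} {A : Fin n → Fin n → Prop} (hprim : Primitive A)
    {X : Finset (Fin n)} {p : ℕ} (hP : ∀ w, ∃ x ∈ X, HasWalk A x w p) :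
    ∀ m, ∀ w, ∃ x ∈ X, HasWalk A x w (p + m) := by
  intro m
  induction m with
  | zero => simpa using hP
  | succ m ih =>
    intro w
    obtain ⟨p0, hp0, hall⟩ := hprim
    obtain ⟨f0, hf00, hf0l, hf0a⟩ := hall w w
    set w' := f0 (p0 - 1) with hw'
    have harc : A w' w := by
      have := hf0a (p0 - 1) (by omega)
      rwa [show p0 - 1 + 1 = p0 by omega, hf0l] at this
    obtain ⟨x, hx, f, hfw⟩ := ih w'
    refine ⟨x, hx, wconcat f (fun i => if i = 0 then w' else w) (p + m), ?_⟩
    have hstep : IsWalkSeq A (fun i => if i = 0 then w' else w) w' w 1 := by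
      refine ⟨rfl, rfl, fun i hi => ?_⟩
      interval_cases i
      simpa using harc
    have := isWalkSeq_wconcat hfw hstep
    rwa [show p + m + 1 = p + (m + 1) by omega] at this

/-- Lemma 3.2: if there is a pair of SSSD walks of length `r` from `u` to `v`, then
`L(S,k) ≤ F(D,k) + d(D) + r`. -/
theorem upperBase_le_of_SSSD_walk {n : ℕ} (S : Fin n → Fin n → ℤ)
    (hsp : SignPattern S) (hprim : Primitive (Underlying S)) (hnp : NonPowerful S)
    (u v : Fin n) (r : ℕ) (hssd : HasSSSD S u v r)
    (k : ℕ) (hk1 : 1 ≤ k) (hkn : k ≤ n) :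
    upperBase S k ≤ upperMultiexp (Underlying S) k + diam (Underlying S) + r := by
  set D := Underlying S with hD
  set F := upperMultiexp D k with hF
  set d := diam D with hd
  obtain ⟨p0, hp0, hall⟩ := hprim
  -- the key bound for any X of cardinality k
  have key : ∀ X : Finset (Fin n), X.card = k → setBase S X ≤ F + d + r := by
    intro X hX
    -- X is nonempty
    obtain ⟨x0, hx0⟩ := Finset.card_pos.mp (by omega : 0 < X.card)
    -- setExp X ≤ F
    have hEset : (setExp D X) ∈ {e | ∃ Y : Finset (Fin n), Y.card = k ∧ setExp D Y = e} :=
      ⟨X, hX, rfl⟩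
    have hbddF : BddAbove {e | ∃ Y : Finset (Fin n), Y.card = k ∧ setExp D Y = e} := by
      apply Set.Finite.bddAbove
      apply (Set.finite_range (setExp D)).subset
      rintro e ⟨Y, _, rfl⟩
      exact ⟨Y, rfl⟩
    have hE : setExp D X ≤ F := le_csSup hbddF hEset
    -- the covering property holds at setExp D X
    have hne : {p | ∀ w, ∃ x ∈ X, HasWalk D x w p}.Nonempty :=
      ⟨p0, fun w => ⟨x0, hx0, hall x0 w⟩⟩
    have hP : ∀ w, ∃ x ∈ X, HasWalk D x w (setExp D X) := Nat.sInf_mem hne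
    apply Nat.sInf_le
    intro w
    -- distance from v to w
    have hdne : {l | HasWalk D v w l}.Nonempty := ⟨p0, hall v w⟩
    have hvw : HasWalk D v w (ddist D v w) := Nat.sInf_mem hdne
    have hbddd : BddAbove {e | ∃ a b : Fin n, ddist D a b = e} := by
      apply Set.Finite.bddAbove
      apply (Set.finite_range (fun q : Fin n × Fin n => ddist D q.1 q.2)).subset
      rintro e ⟨a, b, rfl⟩
      exact ⟨(a, b), rfl⟩
    have hdd : ddist D v w ≤ d := le_csSup hbddd ⟨v, w, rfl⟩
    -- walk of length F + (d - ddist) from some x ∈ X to u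
    obtain ⟨x, hx, hxu⟩ :=
      cover_extend ⟨p0, hp0, hall⟩ hP (F + (d - ddist D v w) - setExp D X) u
    have hlen : setExp D X + (F + (d - ddist D v w) - setExp D X) = F + (d - ddist D v w) := by
      omega
    rw [hlen] at hxu
    have := hasSSSD_concat hxu hssd hvw
    rw [show F + (d - ddist D v w) + r + ddist D v w = F + d + r by omega] at this
    exact ⟨x, hx, this⟩
  -- conclude
  obtain ⟨X₀, _, hX₀⟩ := Finset.exists_subset_card_eq (s := (Finset.univ : Finset (Fin n))) (n := k)
    (by simpa using hkn)
  refine csSup_le ⟨setBase S X₀, X₀, hX₀, rfl⟩ ?_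
  rintro e ⟨X, hXc, rfl⟩
  exact key X hXc
end

section
/- Let D₁ be the digraph on vertices {1,...,n} consisting of a Hamiltonian cycle 1→2→⋯→n→1 together with the extra arc (n-1)→1, so D₁ has exactly two cycles, of lengths n and n-1. Let 1 ≤ k ≤ n and X ⊆ V(D₁) with |X| = k. Then for every integer l ≥ (n-k)(n-1) and every vertex i with 1 ≤ i ≤ n-1, there exists a walk of length l in D₁ from some vertex of X to i. -/
lemma big_arc {n : ℕ} (hn : 2 ≤ n) (a : ℕ) :
    D1 n ⟨a % n, Nat.mod_lt _ (by omega)⟩ ⟨(a+1) % n, Nat.mod_lt _ (by omega)⟩ := by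
  rcases Nat.lt_or_ge (a % n) (n-1) with h | h
  · left
    simp only []
    have : (a+1) % n = a % n + 1 := by
      conv_lhs => rw [← Nat.mod_add_mod]
      exact Nat.mod_eq_of_lt (by omega)
    simpa using this
  · right; left
    have h1 : a % n = n - 1 := by have := Nat.mod_lt a (show 0 < n by omega); omega
    constructor
    · exact h1
    · show (a+1) % n = 0
      have : (a + 1) % n = (a % n + 1) % n := by rw [Nat.mod_add_mod]
      rw [this, h1]
      simp [Nat.sub_add_cancel (by omega : 1 ≤ n)]

lemma small_arc {n : ℕ} (hn : 2 ≤ n) (a : ℕ) :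
    D1 n ⟨a % (n-1), by have := Nat.mod_lt a (show 0 < n-1 by omega); omega⟩
         ⟨(a+1) % (n-1), by have := Nat.mod_lt (a+1) (show 0 < n-1 by omega); omega⟩ := by
  rcases Nat.lt_or_ge (a % (n-1)) (n-2) with h | h
  · left
    show (a+1) % (n-1) = a % (n-1) + 1
    conv_lhs => rw [← Nat.mod_add_mod]
    exact Nat.mod_eq_of_lt (by omega)
  · right; right
    have h1 : a % (n-1) = n - 2 := by
      have := Nat.mod_lt a (show 0 < n-1 by omega); omega
    refine ⟨h1, ?_⟩
    show (a+1) % (n-1) = 0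
    rw [← Nat.mod_add_mod, h1]
    have : n - 2 + 1 = n - 1 := by omega
    simp [this]


lemma walk_combo {n : ℕ} (hn : 2 ≤ n) (x i : Fin n) (t1 t2 : ℕ)
    (hmid : (x.val + t1) % n ≤ n - 2)
    (hend : ((x.val + t1) % n + t2) % (n-1) = i.val) :
    HasWalk (D1 n) x i (t1 + t2) := by
  refine ⟨fun t => if t ≤ t1 then ⟨(x.val + t) % n, Nat.mod_lt _ (by omega)⟩
    else ⟨((x.val + t1) % n + (t - t1)) % (n-1), by have := Nat.mod_lt ((x.val + t1) % n + (t - t1)) (show 0 < n-1 by omega); omega⟩, ?_, ?_, ?_⟩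
  · simp [Nat.mod_eq_of_lt x.isLt]
  · by_cases h2 : t2 = 0
    · subst h2
      simp only [add_zero, if_pos (le_refl t1)]
      apply Fin.ext
      show (x.val + t1) % n = i.val
      rw [← hend]
      rw [add_zero, Nat.mod_eq_of_lt (show (x.val + t1) % n < n - 1 by omega)]
    · simp only []
      rw [if_neg (by omega : ¬ t1 + t2 ≤ t1)]
      apply Fin.ext
      show ((x.val + t1) % n + (t1 + t2 - t1)) % (n-1) = i.val
      rw [show t1 + t2 - t1 = t2 by omega]
      exact hend
  · intro t ht
    simp only []
    by_cases h1 : t + 1 ≤ t1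
    · rw [if_pos (by omega : t ≤ t1), if_pos h1]
      have := big_arc hn (x.val + t)
      rw [show x.val + (t+1) = x.val + t + 1 by omega]
      exact this
    · rw [if_neg h1]
      by_cases h2 : t ≤ t1
      · have ht1 : t = t1 := by omega
        subst ht1
        rw [if_pos le_rfl]
        have harc := small_arc hn ((x.val + t) % n)
        have e1 : (⟨(x.val + t) % n, Nat.mod_lt _ (by omega)⟩ : Fin n)
            = ⟨(x.val + t) % n % (n-1), by have := Nat.mod_lt ((x.val+t)%n) (show 0 < n-1 by omega); omega⟩ := by
          apply Fin.ext
          show (x.val + t) % n = (x.val + t) % n % (n-1)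
          rw [Nat.mod_eq_of_lt (show (x.val + t) % n < n - 1 by omega)]
        rw [e1]; simp only [show t + 1 - t = 1 by omega]
        exact harc
      · rw [if_neg h2]
        have harc := small_arc hn ((x.val + t1) % n + (t - t1))
        simp only [show t + 1 - t1 = (t - t1) + 1 by omega,
            show (x.val + t1) % n + (t - t1 + 1) = ((x.val + t1) % n + (t - t1)) + 1 by omega]
        exact harc

lemma mul_n (n b : ℕ) (hn : 1 ≤ n) : b * n = b * (n-1) + b := by
  conv_lhs => rw [← Nat.sub_add_cancel hn]
  ring

lemma rep_bigq (m l β : ℕ) (hm : 1 ≤ m) (hβ : β ≤ m) (hq : m ≤ l / m) :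
    ∃ a b : ℕ, l = b * (m+1) + β + a * m := by
  have hqR := Nat.div_add_mod l m
  have hR : l % m < m := Nat.mod_lt _ (by omega)
  have hDm := Nat.div_add_mod (l + m - β) m
  have hbm : (l + m - β) % m < m := Nat.mod_lt _ (by omega)
  set c := (l + m - β) / m with hc
  set b := (l + m - β) % m with hb
  have hcq : l / m ≤ c := by
    rcases le_or_gt (l/m) c with h | h
    · exact h
    · exfalso
      have h2 : m * (c+1) ≤ m * (l/m) := Nat.mul_le_mul_left m h
      have h3 : m * (c+1) = m * c + m := by ring
      omega
  have hcb : b + 1 ≤ c := by omega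
  obtain ⟨a, ha⟩ : ∃ a, c = a + b + 1 := ⟨c - b - 1, by omega⟩
  refine ⟨a, b, ?_⟩
  have h5 : m * c = m * a + m * b + m := by rw [ha]; ring
  have h6 : b * (m+1) + β + a * m = m * b + b + β + m * a := by ring
  omega

lemma rep_bigq' (n l β : ℕ) (hn : 2 ≤ n) (hβ : β ≤ n-1) (hq : n-1 ≤ l / (n-1)) :
    ∃ a b : ℕ, l = b * n + β + a * (n-1) := by
  obtain ⟨a, b, h⟩ := rep_bigq (n-1) l β (by omega) hβ hq
  refine ⟨a, b, ?_⟩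
  have e1 : b * n = b * (n-1) + b := mul_n n b (by omega)
  have e2 : b * ((n-1)+1) = b * (n-1) + b := by ring
  omega

theorem D1_key {n : ℕ} (hn : 2 ≤ n) (k : ℕ) (hk1 : 1 ≤ k) (hkn : k ≤ n)
    (X : Finset (Fin n)) (hX : X.card = k) (l : ℕ) (hl : (n - k) * (n - 1) ≤ l)
    (i : Fin n) (hi : i.val < n - 1) :
    ∃ x ∈ X, ∃ t1 t2 : ℕ, t1 + t2 = l ∧ (x.val + t1) % n ≤ n - 2 ∧
      ((x.val + t1) % n + t2) % (n-1) = i.val := by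
  have hm1 : 1 ≤ n - 1 := by omega
  have hqR := Nat.div_add_mod l (n-1)
  set q := l / (n-1) with hqdef
  set R := l % (n-1) with hRdef
  have hR : R < n - 1 := Nat.mod_lt _ (by omega)
  have hqk : n - k ≤ q := by
    rcases le_or_gt (n-k) q with h | h
    · exact h
    · exfalso
      have h2 : (q+1) * (n-1) ≤ (n-k) * (n-1) := Nat.mul_le_mul_right _ (by omega)
      have h3 : (q+1) * (n-1) = (n-1) * q + (n-1) := by ring
      omega
  by_cases hbig : n - 1 ≤ q
  · -- Case A : q ≥ n-1, any x works
    have hXne : X.Nonempty := Finset.card_pos.mp (by omega)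
    obtain ⟨x, hxX⟩ := hXne
    by_cases hxm : x.val < n - 1
    · -- option P
      set β := (i.val + (n-1) - x.val) % (n-1) with hβdef
      have hβlt : β < n - 1 := Nat.mod_lt _ (by omega)
      obtain ⟨a, b, hab⟩ := rep_bigq' n l β hn (by omega) hbig
      refine ⟨x, hxX, b * n, β + a * (n-1), ?_, ?_, ?_⟩
      · have e1 : b * n = b * (n-1) + b := mul_n n b (by omega)
        omega
      · rw [Nat.add_mul_mod_self_right, Nat.mod_eq_of_lt x.isLt]
        omega
      · rw [Nat.add_mul_mod_self_right, Nat.mod_eq_of_lt x.isLt]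
        rw [show x.val + (β + a * (n-1)) = (x.val + β) + a * (n-1) by ring]
        rw [Nat.add_mul_mod_self_right, hβdef, Nat.add_mod_mod]
        rw [show x.val + (i.val + (n-1) - x.val) = i.val + (n-1) by omega]
        rw [Nat.add_mod_right]
        exact Nat.mod_eq_of_lt (by omega)
    · -- x = n-1
      have hxv : x.val = n - 1 := by have := x.isLt; omega
      obtain ⟨a, b, hab⟩ := rep_bigq' n l (i.val + 1) hn (by omega) hbig
      refine ⟨x, hxX, 1 + b * n, i.val + a * (n-1), ?_, ?_, ?_⟩
      · have e1 : b * n = b * (n-1) + b := mul_n n b (by omega)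
        omega
      · rw [show x.val + (1 + b * n) = n + b * n by omega]
        rw [Nat.add_mul_mod_self_right, Nat.mod_self]
        omega
      · rw [show x.val + (1 + b * n) = n + b * n by omega]
        rw [Nat.add_mul_mod_self_right, Nat.mod_self, zero_add]
        rw [Nat.add_mul_mod_self_right]
        exact Nat.mod_eq_of_lt (by omega)
  · -- Case B : q ≤ n-2
    have hq2 : q ≤ n - 2 := by omega
    have pig : ∀ v : ℕ → Fin n, (∀ j j', j ≤ q → j' ≤ q → v j = v j' → j = j') →
        ∃ j, j ≤ q ∧ v j ∈ X := by
      intro v hinj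
      by_contra hcon
      push_neg at hcon
      have hdisj : Disjoint X ((Finset.range (q+1)).image v) := by
        rw [Finset.disjoint_right]
        intro a ha
        obtain ⟨j, hj, rfl⟩ := Finset.mem_image.mp ha
        exact hcon j (by have := Finset.mem_range.mp hj; omega)
      have hcard : ((Finset.range (q+1)).image v).card = q + 1 := by
        rw [Finset.card_image_of_injOn, Finset.card_range]
        intro a ha b hb hab
        exact hinj a b (by have := Finset.mem_range.mp ha; omega)
          (by have := Finset.mem_range.mp hb; omega) hab
      have hle := Finset.card_le_univ (X ∪ (Finset.range (q+1)).image v)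
      rw [Finset.card_union_of_disjoint hdisj, hX, hcard, Fintype.card_fin] at hle
      omega
    have inj_mod : ∀ (C j j' : ℕ), j < n-1 → j' < n-1 →
        (C + j) % (n-1) = (C + j') % (n-1) → j = j' := by
      intro C j j' h1 h2 h
      have h4 := Nat.ModEq.add_left_cancel' C (h : (C + j) ≡ (C + j') [MOD (n-1)])
      rw [Nat.ModEq, Nat.mod_eq_of_lt h1, Nat.mod_eq_of_lt h2] at h4
      exact h4
    set y : ℕ → Fin n := fun j => ⟨(i.val + (n-1-R) + j) % (n-1),
      by have := Nat.mod_lt (i.val + (n-1-R) + j) (show 0 < n-1 by omega); omega⟩ with hy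
    have hyval : ∀ j, (y j).val = (i.val + (n-1-R) + j) % (n-1) := fun j => rfl
    have hylt : ∀ j, (y j).val < n - 1 := fun j => Nat.mod_lt _ (by omega)
    have yinj : ∀ j j', j ≤ q → j' ≤ q → y j = y j' → j = j' := by
      intro j j' hj hj' h
      exact inj_mod (i.val + (n-1-R)) j j' (by omega) (by omega)
        (by rw [← hyval j, ← hyval j', h])
    -- good data for y j when j ≤ R
    have mkle : ∀ j, j ≤ q → j ≤ R → ∃ t1 t2 : ℕ, t1 + t2 = l ∧
        ((y j).val + t1) % n ≤ n - 2 ∧ (((y j).val + t1) % n + t2) % (n-1) = i.val := by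
      intro j hjq hjR
      obtain ⟨a, ha⟩ : ∃ a, q = j + a := ⟨q - j, by omega⟩
      obtain ⟨r0, hr0⟩ : ∃ r0, R = j + r0 := ⟨R - j, by omega⟩
      have e1 : j * n = j * (n-1) + j := mul_n n j (by omega)
      have e2 : (n-1) * q = (n-1) * j + (n-1) * a := by rw [ha]; ring
      have c1 : j * (n-1) = (n-1) * j := by ring
      have c2 : a * (n-1) = (n-1) * a := by ring
      have hmide : ((y j).val + j * n) % n = (y j).val := by
        rw [Nat.add_mul_mod_self_right, Nat.mod_eq_of_lt (y j).isLt]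
      refine ⟨j * n, r0 + a * (n-1), by omega, by rw [hmide]; have hv1 := hyval j; have hv2 := hylt j; omega, ?_⟩
      rw [hmide]
      rw [show (y j).val + (r0 + a * (n-1)) = ((y j).val + r0) + a * (n-1) by ring]
      rw [Nat.add_mul_mod_self_right, hyval, Nat.mod_add_mod]
      rw [show i.val + (n-1-R) + j + r0 = i.val + (n-1) by omega]
      rw [Nat.add_mod_right]
      exact Nat.mod_eq_of_lt (by omega)
    -- good data for y j when R < j < q
    have mkgt : ∀ j, j < q → R < j → ∃ t1 t2 : ℕ, t1 + t2 = l ∧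
        ((y j).val + t1) % n ≤ n - 2 ∧ (((y j).val + t1) % n + t2) % (n-1) = i.val := by
      intro j hjq hjR
      obtain ⟨a, ha⟩ : ∃ a, q = j + a + 1 := ⟨q - j - 1, by omega⟩
      obtain ⟨d, hd⟩ : ∃ d, j + d = (n-1) + R := ⟨(n-1) + R - j, by omega⟩
      have e1 : j * n = j * (n-1) + j := mul_n n j (by omega)
      have e2 : (n-1) * q = (n-1) * j + (n-1) * a + (n-1) := by rw [ha]; ring
      have c1 : j * (n-1) = (n-1) * j := by ring
      have c2 : a * (n-1) = (n-1) * a := by ring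
      have hmide : ((y j).val + j * n) % n = (y j).val := by
        rw [Nat.add_mul_mod_self_right, Nat.mod_eq_of_lt (y j).isLt]
      refine ⟨j * n, a * (n-1) + d, by omega, by rw [hmide]; have hv1 := hyval j; have hv2 := hylt j; omega, ?_⟩
      rw [hmide]
      rw [show (y j).val + (a * (n-1) + d) = ((y j).val + d) + a * (n-1) by ring]
      rw [Nat.add_mul_mod_self_right, hyval, Nat.mod_add_mod]
      rw [show i.val + (n-1-R) + j + d = i.val + (n-1) + (n-1) by omega]
      rw [Nat.add_mod_right, Nat.add_mod_right]
      exact Nat.mod_eq_of_lt (by omega)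
    by_cases hqR2 : q ≤ R
    · obtain ⟨j, hjq, hjX⟩ := pig y yinj
      obtain ⟨t1, t2, h1, h2, h3⟩ := mkle j hjq (by omega)
      exact ⟨y j, hjX, t1, t2, h1, h2, h3⟩
    · -- R < q; extra vertex w
      push_neg at hqR2
      by_cases hw : i.val + q ≤ (n-1) + R
      · -- w = i + q - R
        have hw1 : 1 ≤ i.val + q - R := by omega
        have hw2 : i.val + q - R ≤ n - 1 := by omega
        set w : Fin n := ⟨i.val + q - R, by omega⟩ with hwdef
        set v : ℕ → Fin n := fun j => if j < q then y j else w with hv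
        have vinj : ∀ j j', j ≤ q → j' ≤ q → v j = v j' → j = j' := by
          have key : ∀ j, j < q → ¬ (y j = w) := by
            intro j hj h
            have hval : (i.val + (n-1-R) + j) % (n-1) = i.val + q - R := by
              rw [← hyval j, h]
            by_cases hwm : i.val + q - R < n - 1
            · have hq' : (i.val + (n-1-R) + q) % (n-1) = i.val + q - R := by
                rw [show i.val + (n-1-R) + q = (i.val + q - R) + (n-1) by omega]
                rw [Nat.add_mod_right]
                exact Nat.mod_eq_of_lt hwm
              have := inj_mod (i.val + (n-1-R)) j q (by omega) (by omega)
                (by rw [hval, hq'])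
              omega
            · have hv1 := hyval j
              have hv2 := hylt j
              omega
          intro j j' hj hj' h
          rcases Nat.lt_or_ge j q with h1 | h1 <;> rcases Nat.lt_or_ge j' q with h2 | h2
          · exact yinj j j' (by omega) (by omega)
              (by simp only [hv] at h; rwa [if_pos h1, if_pos h2] at h)
          · exfalso
            have hj'q : j' = q := by omega
            simp only [hv, hj'q] at h
            rw [if_pos h1, if_neg (lt_irrefl q)] at h
            exact key j h1 h
          · exfalso
            have hjq : j = q := by omega
            simp only [hv, hjq] at h
            rw [if_pos h2, if_neg (lt_irrefl q)] at h
            exact key j' h2 h.symm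
          · omega
        obtain ⟨j, hjq, hjX⟩ := pig v vinj
        rcases Nat.lt_or_ge j q with hlt | hge
        · have hvj : v j = y j := by simp only [hv]; rw [if_pos hlt]
          rw [hvj] at hjX
          rcases le_or_gt j R with hjR | hjR
          · obtain ⟨t1, t2, h1, h2, h3⟩ := mkle j (by omega) hjR
            exact ⟨y j, hjX, t1, t2, h1, h2, h3⟩
          · obtain ⟨t1, t2, h1, h2, h3⟩ := mkgt j hlt hjR
            exact ⟨y j, hjX, t1, t2, h1, h2, h3⟩
        · have hjq' : j = q := by omega
          have hvj : v j = w := by simp only [hv, hjq']; rw [if_neg (lt_irrefl q)]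
          rw [hvj] at hjX
          -- data for w
          obtain ⟨a', ha'⟩ : ∃ a', q = a' + 1 := ⟨q - 1, by omega⟩
          obtain ⟨e, he⟩ : ∃ e, e + (i.val + q - R) = n := ⟨n - (i.val + q - R), by omega⟩
          have e1 : a' * n = a' * (n-1) + a' := mul_n n a' (by omega)
          have e2 : (n-1) * q = (n-1) * a' + (n-1) := by rw [ha']; ring
          have c2 : a' * (n-1) = (n-1) * a' := by ring
          refine ⟨w, hjX, e + a' * n, i.val, ?_, ?_, ?_⟩
          · omega
          · rw [show w.val + (e + a' * n) = n + a' * n by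
              have : w.val = i.val + q - R := rfl; omega]
            rw [Nat.add_mul_mod_self_right, Nat.mod_self]
            omega
          · rw [show w.val + (e + a' * n) = n + a' * n by
              have : w.val = i.val + q - R := rfl; omega]
            rw [Nat.add_mul_mod_self_right, Nat.mod_self, zero_add]
            exact Nat.mod_eq_of_lt (by omega)
      · -- w = n-1
        push_neg at hw
        set w : Fin n := ⟨n-1, by omega⟩ with hwdef
        set v : ℕ → Fin n := fun j => if j < q then y j else w with hv
        have vinj : ∀ j j', j ≤ q → j' ≤ q → v j = v j' → j = j' := by
          have key : ∀ j, j < q → ¬ (y j = w) := by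
            intro j hj h
            have hv1 := hyval j
            have hv2 := hylt j
            have hv3 : (y j).val = n - 1 := by rw [h]
            omega
          intro j j' hj hj' h
          rcases Nat.lt_or_ge j q with h1 | h1 <;> rcases Nat.lt_or_ge j' q with h2 | h2
          · exact yinj j j' (by omega) (by omega)
              (by simp only [hv] at h; rwa [if_pos h1, if_pos h2] at h)
          · exfalso
            have hj'q : j' = q := by omega
            simp only [hv, hj'q] at h
            rw [if_pos h1, if_neg (lt_irrefl q)] at h
            exact key j h1 h
          · exfalso
            have hjq : j = q := by omega
            simp only [hv, hjq] at h
            rw [if_pos h2, if_neg (lt_irrefl q)] at h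
            exact key j' h2 h.symm
          · omega
        obtain ⟨j, hjq, hjX⟩ := pig v vinj
        rcases Nat.lt_or_ge j q with hlt | hge
        · have hvj : v j = y j := by simp only [hv]; rw [if_pos hlt]
          rw [hvj] at hjX
          rcases le_or_gt j R with hjR | hjR
          · obtain ⟨t1, t2, h1, h2, h3⟩ := mkle j (by omega) hjR
            exact ⟨y j, hjX, t1, t2, h1, h2, h3⟩
          · obtain ⟨t1, t2, h1, h2, h3⟩ := mkgt j hlt hjR
            exact ⟨y j, hjX, t1, t2, h1, h2, h3⟩
        · have hjq' : j = q := by omega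
          have hvj : v j = w := by simp only [hv, hjq']; rw [if_neg (lt_irrefl q)]
          rw [hvj] at hjX
          obtain ⟨b, hb⟩ : ∃ b, b + (i.val + 1) = (n-1) + R := ⟨(n-1) + R - (i.val+1), by omega⟩
          obtain ⟨a, ha⟩ : ∃ a, (n-1) + R + a = i.val + q := ⟨i.val + q - ((n-1)+R), by omega⟩
          have e1 : b * n = b * (n-1) + b := mul_n n b (by omega)
          have e2 : (n-1) * q = (n-1) * b + (n-1) * a + (n-1) := by
            rw [show q = b + a + 1 by omega]; ring
          have c1 : b * (n-1) = (n-1) * b := by ring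
          have c2 : a * (n-1) = (n-1) * a := by ring
          refine ⟨w, hjX, 1 + b * n, i.val + a * (n-1), ?_, ?_, ?_⟩
          · omega
          · rw [show w.val + (1 + b * n) = n + b * n by
              have : w.val = n - 1 := rfl; omega]
            rw [Nat.add_mul_mod_self_right, Nat.mod_self]
            omega
          · rw [show w.val + (1 + b * n) = n + b * n by
              have : w.val = n - 1 := rfl; omega]
            rw [Nat.add_mul_mod_self_right, Nat.mod_self, zero_add]
            rw [Nat.add_mul_mod_self_right]
            exact Nat.mod_eq_of_lt (by omega)

/-- Lemma 3.1: in `D₁`, for every `l ≥ (n-k)(n-1)` and every vertex `i` with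
`1 ≤ i ≤ n-1` (index `< n-1`), there is a walk of length `l` from some vertex of
`X` to `i`. -/
theorem D1_walk_lemma {n : ℕ} (hn : 2 ≤ n) (k : ℕ) (hk1 : 1 ≤ k) (hkn : k ≤ n)
    (X : Finset (Fin n)) (hX : X.card = k) (l : ℕ) (hl : (n - k) * (n - 1) ≤ l)
    (i : Fin n) (hi : i.val < n - 1) :
    ∃ x ∈ X, HasWalk (D1 n) x i l := by
  obtain ⟨x, hxX, t1, t2, hsum, hmid, hend⟩ := D1_key hn k hk1 hkn X hX l hl i hi
  have w := walk_combo hn x i t1 t2 hmid hend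
  rw [hsum] at w
  exact ⟨x, hxX, w⟩
end

section
/- Let n ≥ 2, 1 ≤ k ≤ n, and let S₁ be a primitive non-powerful signed digraph whose underlying digraph is D₁. Then L(S₁,k) = (2n-k)(n-1) + 1. -/
namespace UB1

variable {n : ℕ}

/-- Vertex `j` (capped at `n-1`). -/
def FV (hn : 2 ≤ n) (j : ℕ) : Fin n := ⟨min j (n-1), by omega⟩

@[simp] lemma FV_val (hn : 2 ≤ n) (j : ℕ) (hj : j ≤ n - 1) : (FV hn j).val = j := by
  simp [FV]; omega

/-- Sign of the forward path `0 → 1 → ⋯ → w`. -/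
def ee (hn : 2 ≤ n) (S : Fin n → Fin n → ℤ) (w : ℕ) : ℤ :=
  ∏ i ∈ Finset.range w, S (FV hn i) (FV hn (i+1))

/-- Sign of the short cycle (length `n-1`). -/
def sg1 (hn : 2 ≤ n) (S : Fin n → Fin n → ℤ) : ℤ :=
  ee hn S (n-2) * S (FV hn (n-2)) (FV hn 0)

/-- Sign of the long cycle (length `n`). -/
def sg2 (hn : 2 ≤ n) (S : Fin n → Fin n → ℤ) : ℤ :=
  ee hn S (n-1) * S (FV hn (n-1)) (FV hn 0)

lemma arc_fwd (hn : 2 ≤ n) {j : ℕ} (hj : j < n - 1) : D1 n (FV hn j) (FV hn (j+1)) := by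
  left; rw [FV_val hn j (by omega), FV_val hn (j+1) (by omega)]

lemma arc_long (hn : 2 ≤ n) : D1 n (FV hn (n-1)) (FV hn 0) := by
  right; left
  rw [FV_val hn (n-1) le_rfl, FV_val hn 0 (by omega)]
  exact ⟨rfl, rfl⟩

lemma arc_short (hn : 2 ≤ n) : D1 n (FV hn (n-2)) (FV hn 0) := by
  right; right
  rw [FV_val hn (n-2) (by omega), FV_val hn 0 (by omega)]
  exact ⟨rfl, rfl⟩

section Units

variable (hn : 2 ≤ n) (S : Fin n → Fin n → ℤ) (hsp : SignPattern S)
  (hund : ∀ u v, Underlying S u v ↔ D1 n u v)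
include hsp hund

lemma unit_arc {u v : Fin n} (h : D1 n u v) : S u v * S u v = 1 := by
  have h0 : S u v ≠ 0 := (hund u v).2 h
  rcases hsp u v with h1 | h1 | h1 <;> simp [h1] at h0 ⊢

lemma unit_ee {w : ℕ} (hw : w ≤ n - 1) : ee hn S w * ee hn S w = 1 := by
  induction w with
  | zero => simp [ee]
  | succ m ih =>
    rw [ee, Finset.prod_range_succ, ← ee]
    have h1 := ih (by omega)
    have h2 := unit_arc S hsp hund (arc_fwd hn (j := m) (by omega))
    calc ee hn S m * S (FV hn m) (FV hn (m+1)) * (ee hn S m * S (FV hn m) (FV hn (m+1)))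
        = (ee hn S m * ee hn S m) * (S (FV hn m) (FV hn (m+1)) * S (FV hn m) (FV hn (m+1))) := by
          ring
      _ = 1 := by rw [h1, h2]; ring

lemma unit_sg1 : sg1 hn S * sg1 hn S = 1 := by
  have h1 := unit_ee hn S hsp hund (w := n - 2) (by omega)
  have h2 := unit_arc S hsp hund (arc_short hn)
  unfold sg1
  calc ee hn S (n-2) * S (FV hn (n-2)) (FV hn 0) * (ee hn S (n-2) * S (FV hn (n-2)) (FV hn 0))
      = (ee hn S (n-2) * ee hn S (n-2)) * (S (FV hn (n-2)) (FV hn 0) * S (FV hn (n-2)) (FV hn 0)) := by ring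
    _ = 1 := by rw [h1, h2]; ring

lemma unit_sg2 : sg2 hn S * sg2 hn S = 1 := by
  have h1 := unit_ee hn S hsp hund (w := n - 1) le_rfl
  have h2 := unit_arc S hsp hund (arc_long hn)
  unfold sg2
  calc ee hn S (n-1) * S (FV hn (n-1)) (FV hn 0) * (ee hn S (n-1) * S (FV hn (n-1)) (FV hn 0))
      = (ee hn S (n-1) * ee hn S (n-1)) * (S (FV hn (n-1)) (FV hn 0) * S (FV hn (n-1)) (FV hn 0)) := by ring
    _ = 1 := by rw [h1, h2]; ring

end Units

end UB1
namespace UB1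

variable {n : ℕ}

section Walks

variable (hn : 2 ≤ n) (S : Fin n → Fin n → ℤ) (hsp : SignPattern S)
  (hund : ∀ u v, Underlying S u v ↔ D1 n u v)

lemma append {f g : ℕ → Fin n} {u w v : Fin n} {l₁ l₂ : ℕ}
    (hf : IsWalkSeq (Underlying S) f u w l₁) (hg : IsWalkSeq (Underlying S) g w v l₂) :
    ∃ h, IsWalkSeq (Underlying S) h u v (l₁ + l₂) ∧
      walkSign S h (l₁ + l₂) = walkSign S f l₁ * walkSign S g l₂ := by
  obtain ⟨hf0, hf1, hf2⟩ := hf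
  obtain ⟨hg0, hg1, hg2⟩ := hg
  set h : ℕ → Fin n := fun i => if i < l₁ then f i else g (i - l₁) with hdef
  have hm1 : ∀ i ≤ l₁, h i = f i := by
    intro i hi
    rcases lt_or_eq_of_le hi with hlt | hlt
    · simp [hdef, hlt]
    · subst hlt
      simp only [hdef]
      rw [if_neg (lt_irrefl _), Nat.sub_self, hg0, hf1]
  have hm2 : ∀ i, h (l₁ + i) = g i := by
    intro i
    simp only [hdef]
    rw [if_neg (by omega), Nat.add_sub_cancel_left]
  refine ⟨h, ⟨?_, ?_, ?_⟩, ?_⟩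
  · rw [hm1 0 (by omega), hf0]
  · rw [hm2 l₂]; exact hg1
  · intro i hi
    rcases lt_or_ge i l₁ with hc | hc
    · rw [hm1 i (by omega), hm1 (i+1) (by omega)]; exact hf2 i hc
    · obtain ⟨j, rfl⟩ : ∃ j, i = l₁ + j := ⟨i - l₁, by omega⟩
      rw [hm2 j, show l₁ + j + 1 = l₁ + (j+1) by omega, hm2 (j+1)]
      exact hg2 j (by omega)
  · rw [walkSign, Finset.prod_range_add]
    congr 1
    · apply Finset.prod_congr rfl
      intro i hi
      rw [Finset.mem_range] at hi
      rw [hm1 i (by omega), hm1 (i+1) (by omega)]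
    · apply Finset.prod_congr rfl
      intro i hi
      rw [Finset.mem_range] at hi
      rw [hm2 i, show l₁ + i + 1 = l₁ + (i+1) by omega, hm2 (i+1)]

include hsp hund in
lemma pathWalk (u v : Fin n) (huv : u.val ≤ v.val) :
    ∃ f, IsWalkSeq (Underlying S) f u v (v.val - u.val) ∧
      walkSign S f (v.val - u.val) = ee hn S u.val * ee hn S v.val := by
  have hv : v.val ≤ n - 1 := by omega
  refine ⟨fun i => FV hn (min (u.val + i) v.val), ⟨?_, ?_, ?_⟩, ?_⟩
  · apply Fin.ext
    show (FV hn (min (u.val + 0) v.val)).val = u.val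
    rw [show min (u.val + 0) v.val = u.val by omega, FV_val hn _ (by omega)]
  · apply Fin.ext
    show (FV hn (min (u.val + (v.val - u.val)) v.val)).val = v.val
    rw [show min (u.val + (v.val - u.val)) v.val = v.val by omega, FV_val hn _ hv]
  · intro i hi
    show Underlying S (FV hn (min (u.val + i) v.val)) (FV hn (min (u.val + (i+1)) v.val))
    rw [show min (u.val + i) v.val = u.val + i by omega,
        show min (u.val + (i+1)) v.val = u.val + (i+1) by omega]
    rw [hund]
    exact arc_fwd hn (by omega)
  · have key : walkSign S (fun i => FV hn (min (u.val + i) v.val)) (v.val - u.val)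
        = ∏ i ∈ Finset.range (v.val - u.val), S (FV hn (u.val + i)) (FV hn (u.val + i + 1)) := by
      apply Finset.prod_congr rfl
      intro i hi
      rw [Finset.mem_range] at hi
      show S (FV hn (min (u.val + i) v.val)) (FV hn (min (u.val + (i+1)) v.val)) = _
      rw [show min (u.val + i) v.val = u.val + i by omega,
          show min (u.val + (i+1)) v.val = u.val + (i+1) by omega]
      rfl
    rw [key]
    have hvu : ee hn S v.val = ee hn S u.val *
        ∏ i ∈ Finset.range (v.val - u.val), S (FV hn (u.val + i)) (FV hn (u.val + i + 1)) := by
      have h2 : ee hn S v.val = ee hn S (u.val + (v.val - u.val)) := by congr 1; omega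
      rw [h2, ee, Finset.prod_range_add, ← ee]
    rw [hvu]
    have h1 : ee hn S u.val * ee hn S u.val = 1 := unit_ee hn S hsp hund (by omega)
    linear_combination (-(∏ i ∈ Finset.range (v.val - u.val), S (FV hn (u.val + i)) (FV hn (u.val + i + 1)))) * h1

include hund in
lemma arcWalk (a b : Fin n) (hab : D1 n a b) :
    ∃ f, IsWalkSeq (Underlying S) f a b 1 ∧ walkSign S f 1 = S a b := by
  refine ⟨fun i => if i = 0 then a else b, ⟨by simp, by simp, ?_⟩, by simp [walkSign]⟩
  intro i hi
  interval_cases i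
  show Underlying S (if 0 = 0 then a else b) (if 1 = 0 then a else b)
  rw [if_pos rfl, if_neg one_ne_zero, hund]
  exact hab

include hsp hund in
lemma construct : ∀ s A B : ℕ, ∀ u v : Fin n, ∀ l : ℕ, A + B = s →
    l + u.val = v.val + A * (n-1) + B * n →
    (u.val = n - 1 → A + B ≠ 0 → 1 ≤ B) →
    ∃ f, IsWalkSeq (Underlying S) f u v l ∧
      walkSign S f l = ee hn S u.val * ee hn S v.val * sg1 hn S ^ A * sg2 hn S ^ B := by
  intro s
  induction s with
  | zero =>
    intro A B u v l hs heq _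
    obtain ⟨rfl, rfl⟩ : A = 0 ∧ B = 0 := by omega
    simp only [Nat.mul_zero, Nat.zero_mul, Nat.add_zero] at heq
    have huv : u.val ≤ v.val := by omega
    obtain ⟨f, hf, hsgn⟩ := pathWalk hn S hsp hund u v huv
    have hl : l = v.val - u.val := by omega
    subst hl
    exact ⟨f, hf, by rw [hsgn]; ring⟩
  | succ s ih =>
    intro A B u v l hs heq hcond
    by_cases hu : u.val = n - 1
    · -- must take long arc first
      obtain ⟨B', rfl⟩ : ∃ B', B = B' + 1 := ⟨B - 1, by have := hcond hu (by omega); omega⟩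
      obtain ⟨p, hp⟩ : ∃ p, A * (n-1) = p := ⟨_, rfl⟩
      obtain ⟨q, hq⟩ : ∃ q, B' * n = q := ⟨_, rfl⟩
      rw [add_mul, one_mul, hp, hq] at heq
      have hu' : u = FV hn (n-1) := by
        apply Fin.ext; rw [FV_val hn _ le_rfl, hu]
      obtain ⟨f₁, hf₁, hs₁⟩ := arcWalk S hund (FV hn (n-1)) (FV hn 0) (arc_long hn)
      obtain ⟨f₂, hf₂, hs₂⟩ := ih A B' (FV hn 0) v (v.val + p + q)
        (by omega) (by rw [FV_val hn 0 (by omega), hp, hq]; omega)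
        (by rw [FV_val hn 0 (by omega)]; omega)
      subst hu'
      obtain ⟨f, hf, hsgn⟩ := append S hf₁ hf₂
      have hl : l = 1 + (v.val + p + q) := by rw [FV_val hn _ le_rfl] at heq; omega
      rw [← hl] at hf hsgn
      refine ⟨f, hf, ?_⟩
      rw [hsgn, hs₁, hs₂, FV_val hn 0 (by omega), FV_val hn _ le_rfl]
      have h0 : ee hn S 0 = 1 := by simp [ee]
      have h1 : ee hn S (n-1) * ee hn S (n-1) = 1 := unit_ee hn S hsp hund le_rfl
      have hsg2 : sg2 hn S = ee hn S (n-1) * S (FV hn (n-1)) (FV hn 0) := rfl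
      rw [h0, pow_succ]
      linear_combination (-(ee hn S (n-1) * ee hn S v.val * sg1 hn S ^ A * sg2 hn S ^ B')) * hsg2 +
        (-(S (FV hn (n-1)) (FV hn 0) * ee hn S v.val * sg1 hn S ^ A * sg2 hn S ^ B')) * h1
    · have hu2 : u.val ≤ n - 2 := by omega
      rcases Nat.eq_zero_or_pos A with hA | hA
      · subst hA
        obtain ⟨B', rfl⟩ : ∃ B', B = B' + 1 := ⟨B - 1, by omega⟩
        obtain ⟨q, hq⟩ : ∃ q, B' * n = q := ⟨_, rfl⟩
        rw [add_mul, one_mul, Nat.zero_mul, hq] at heq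
        have hle : u.val ≤ (FV hn (n-1)).val := by rw [FV_val hn _ le_rfl]; omega
        obtain ⟨f₀, hf₀, hs₀⟩ := pathWalk hn S hsp hund u (FV hn (n-1)) hle
        obtain ⟨f₁, hf₁, hs₁⟩ := arcWalk S hund (FV hn (n-1)) (FV hn 0) (arc_long hn)
        obtain ⟨f₂, hf₂, hs₂⟩ := ih 0 B' (FV hn 0) v (v.val + q)
          (by omega) (by rw [FV_val hn 0 (by omega), hq]; simp)
          (by rw [FV_val hn 0 (by omega)]; omega)
        obtain ⟨g, hg, hgs⟩ := append S hf₀ hf₁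
        obtain ⟨f, hf, hsgn⟩ := append S hg hf₂
        rw [FV_val hn _ le_rfl] at hf hsgn hgs hs₀
        have hl : l = n - 1 - u.val + 1 + (v.val + q) := by omega
        rw [← hl] at hf hsgn
        refine ⟨f, hf, ?_⟩
        rw [hsgn, hgs, hs₀, hs₁, hs₂, FV_val hn 0 (by omega)]
        have h0 : ee hn S 0 = 1 := by simp [ee]
        rw [h0, pow_succ, sg2]
        ring
      · obtain ⟨A', rfl⟩ : ∃ A', A = A' + 1 := ⟨A - 1, by omega⟩
        obtain ⟨p, hp⟩ : ∃ p, A' * (n-1) = p := ⟨_, rfl⟩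
        obtain ⟨q, hq⟩ : ∃ q, B * n = q := ⟨_, rfl⟩
        rw [add_mul, one_mul, hp, hq] at heq
        have hle : u.val ≤ (FV hn (n-2)).val := by rw [FV_val hn _ (by omega)]; omega
        obtain ⟨f₀, hf₀, hs₀⟩ := pathWalk hn S hsp hund u (FV hn (n-2)) hle
        obtain ⟨f₁, hf₁, hs₁⟩ := arcWalk S hund (FV hn (n-2)) (FV hn 0) (arc_short hn)
        obtain ⟨f₂, hf₂, hs₂⟩ := ih A' B (FV hn 0) v (v.val + p + q)
          (by omega) (by rw [FV_val hn 0 (by omega), hp, hq]; omega)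
          (by rw [FV_val hn 0 (by omega)]; omega)
        obtain ⟨g, hg, hgs⟩ := append S hf₀ hf₁
        obtain ⟨f, hf, hsgn⟩ := append S hg hf₂
        rw [FV_val hn _ (show n-2 ≤ n-1 by omega)] at hf hsgn hgs hs₀
        have hl : l = n - 2 - u.val + 1 + (v.val + p + q) := by omega
        rw [← hl] at hf hsgn
        refine ⟨f, hf, ?_⟩
        rw [hsgn, hgs, hs₀, hs₁, hs₂, FV_val hn 0 (by omega)]
        have h0 : ee hn S 0 = 1 := by simp [ee]
        rw [h0, pow_succ, sg1]
        ring

end Walks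

end UB1
namespace UB1

variable {n : ℕ}

section Inv

variable (hn : 2 ≤ n) (S : Fin n → Fin n → ℤ) (hsp : SignPattern S)
  (hund : ∀ u v, Underlying S u v ↔ D1 n u v)

include hsp hund in
lemma walkInv : ∀ l : ℕ, ∀ u v : Fin n, ∀ f, IsWalkSeq (Underlying S) f u v l →
    ∃ A B : ℕ, l + u.val = v.val + A * (n-1) + B * n ∧
      walkSign S f l = ee hn S u.val * ee hn S v.val * sg1 hn S ^ A * sg2 hn S ^ B ∧
      (u.val = n - 1 → 1 ≤ l → 1 ≤ B) := by
  intro l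
  induction l with
  | zero =>
    intro u v f hf
    obtain ⟨h0, h1, _⟩ := hf
    have huv : u = v := by rw [← h0, ← h1]
    subst huv
    have h1 : ee hn S u.val * ee hn S u.val = 1 := unit_ee hn S hsp hund (by omega)
    refine ⟨0, 0, by omega, ?_, by omega⟩
    rw [pow_zero, pow_zero, walkSign, Finset.prod_range_zero]
    linear_combination (-1 : ℤ) * h1
  | succ l ih =>
    intro u v f hf
    obtain ⟨h0, h1, h2⟩ := hf
    set u' := f 1 with hu'
    have hg : IsWalkSeq (Underlying S) (fun i => f (i+1)) u' v l := by
      refine ⟨rfl, h1, ?_⟩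
      intro i hi
      exact h2 (i+1) (by omega)
    obtain ⟨A, B, heq, hsgn, hbc⟩ := ih u' v _ hg
    have harc : D1 n u u' := by rw [← hund, ← h0]; exact h2 0 (by omega)
    have hsplit : walkSign S f (l+1) = walkSign S (fun i => f (i+1)) l * S u u' := by
      rw [walkSign, Finset.prod_range_succ']
      rw [h0, hu']
      rfl
    obtain ⟨p, hp⟩ : ∃ p, A * (n-1) = p := ⟨_, rfl⟩
    obtain ⟨q, hq⟩ : ∃ q, B * n = q := ⟨_, rfl⟩
    rw [hp, hq] at heq
    have hvlt := v.isLt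
    have hult := u.isLt
    have hu'lt := u'.isLt
    rcases harc with hc | hc | hc
    · -- forward arc
      have hEE : ee hn S u'.val = ee hn S u.val * S u u' := by
        rw [hc, ee, Finset.prod_range_succ, ← ee]
        congr 2
        · apply Fin.ext; rw [FV_val hn _ (by omega)]
        · apply Fin.ext; rw [FV_val hn _ (by omega), hc]
      refine ⟨A, B, by rw [hp, hq]; omega, ?_, by intro h _; omega⟩
      rw [hsplit, hsgn, hEE]
      have hS : S u u' * S u u' = 1 := unit_arc S hsp hund (by
        rw [← hund, ← h0, hu']; exact h2 0 (by omega))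
      linear_combination (ee hn S u.val * ee hn S v.val * sg1 hn S ^ A * sg2 hn S ^ B) * hS
    · -- long arc u = n-1 → 0
      obtain ⟨hcu, hcv⟩ := hc
      refine ⟨A, B + 1, by rw [hp, add_mul, one_mul, hq]; omega, ?_, by intro _ _; omega⟩
      rw [hsplit, hsgn, hcv]
      have he0 : ee hn S 0 = 1 := by rw [ee, Finset.prod_range_zero]
      have hfu : u = FV hn (n-1) := by apply Fin.ext; rw [FV_val hn _ le_rfl, hcu]
      have hfu' : u' = FV hn 0 := by apply Fin.ext; rw [FV_val hn _ (by omega), hcv]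
      have h1 : ee hn S (n-1) * ee hn S (n-1) = 1 := unit_ee hn S hsp hund le_rfl
      have hsg2 : sg2 hn S = ee hn S (n-1) * S (FV hn (n-1)) (FV hn 0) := rfl
      rw [he0, hcu, pow_succ, hfu, hfu']
      linear_combination (-(ee hn S (n-1) * ee hn S v.val * sg1 hn S ^ A * sg2 hn S ^ B)) * hsg2 +
        (-(S (FV hn (n-1)) (FV hn 0) * ee hn S v.val * sg1 hn S ^ A * sg2 hn S ^ B)) * h1
    · -- short arc u = n-2 → 0
      obtain ⟨hcu, hcv⟩ := hc
      refine ⟨A + 1, B, by rw [hq, add_mul, one_mul, hp]; omega, ?_, by intro h _; omega⟩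
      rw [hsplit, hsgn, hcv]
      have he0 : ee hn S 0 = 1 := by rw [ee, Finset.prod_range_zero]
      have hfu : u = FV hn (n-2) := by apply Fin.ext; rw [FV_val hn _ (by omega), hcu]
      have hfu' : u' = FV hn 0 := by apply Fin.ext; rw [FV_val hn _ (by omega), hcv]
      have h1 : ee hn S (n-2) * ee hn S (n-2) = 1 := unit_ee hn S hsp hund (by omega)
      have hsg1 : sg1 hn S = ee hn S (n-2) * S (FV hn (n-2)) (FV hn 0) := rfl
      rw [he0, hcu, pow_succ, hfu, hfu']
      linear_combination (-(ee hn S (n-2) * ee hn S v.val * sg1 hn S ^ A * sg2 hn S ^ B)) * hsg1 +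
        (-(S (FV hn (n-2)) (FV hn 0) * ee hn S v.val * sg1 hn S ^ A * sg2 hn S ^ B)) * h1

lemma resolve {A B A' B' : ℕ} (heq : A * (n-1) + B * n = A' * (n-1) + B' * n)
    (hAA : A' ≤ A) (hn : 2 ≤ n) : ∃ t, A = A' + t * n ∧ B' = B + t * (n-1) := by
  have hBB : B ≤ B' := by
    have h1 : A' * (n-1) ≤ A * (n-1) := Nat.mul_le_mul_right _ hAA
    have h2 : B * n ≤ B' * n := by omega
    exact Nat.le_of_mul_le_mul_right h2 (by omega)
  have hsub : (A - A') * (n-1) = (B' - B) * n := by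
    rw [Nat.sub_mul, Nat.sub_mul]
    omega
  have hco : Nat.Coprime n (n-1) := by
    have h : Nat.Coprime ((n-1)+1) (n-1) := by
      simp [Nat.Coprime, Nat.succ_sub_one, Nat.gcd_comm]
    rwa [Nat.sub_add_cancel (by omega)] at h
  have hdvd : n ∣ (A - A') := by
    apply hco.dvd_of_dvd_mul_right (m := A - A')
    exact ⟨B' - B, by rw [hsub, Nat.mul_comm]⟩
  obtain ⟨t, ht⟩ := hdvd
  have h1 : A - A' = t * n := by rw [ht, Nat.mul_comm]
  refine ⟨t, by rw [← h1]; omega, ?_⟩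
  rw [h1] at hsub
  have hc2 : (t * (n-1)) * n = (B' - B) * n := by
    rw [show t * (n-1) * n = t * n * (n-1) from by ring, hsub]
  have h3 := Nat.eq_of_mul_eq_mul_right (show 0 < n by omega) hc2
  rw [h3]
  omega

include hsp hund in
lemma sq_sign (a b : ℕ) (u v : Fin n) :
    (ee hn S u.val * ee hn S v.val * sg1 hn S ^ a * sg2 hn S ^ b) *
    (ee hn S u.val * ee hn S v.val * sg1 hn S ^ a * sg2 hn S ^ b) = 1 := by
  have h1 : ee hn S u.val * ee hn S u.val = 1 := unit_ee hn S hsp hund (by omega)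
  have h2 : ee hn S v.val * ee hn S v.val = 1 := unit_ee hn S hsp hund (by omega)
  have h3 := unit_sg1 hn S hsp hund
  have h4 := unit_sg2 hn S hsp hund
  calc (ee hn S u.val * ee hn S v.val * sg1 hn S ^ a * sg2 hn S ^ b) *
      (ee hn S u.val * ee hn S v.val * sg1 hn S ^ a * sg2 hn S ^ b)
      = (ee hn S u.val * ee hn S u.val) * (ee hn S v.val * ee hn S v.val) *
        (sg1 hn S * sg1 hn S) ^ a * (sg2 hn S * sg2 hn S) ^ b := by ring
    _ = 1 := by rw [h1, h2, h3, h4]; simp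

include hsp hund in
lemma signEq (hκ : sg1 hn S ^ n * sg2 hn S ^ (n-1) = 1)
    {A B A' B' : ℕ} (heq : A * (n-1) + B * n = A' * (n-1) + B' * n) :
    sg1 hn S ^ A * sg2 hn S ^ B = sg1 hn S ^ A' * sg2 hn S ^ B' := by
  have key : ∀ A B A' B' : ℕ, A * (n-1) + B * n = A' * (n-1) + B' * n → A' ≤ A →
      sg1 hn S ^ A * sg2 hn S ^ B = sg1 hn S ^ A' * sg2 hn S ^ B' := by
    intro A B A' B' heq hAA
    obtain ⟨t, rfl, rfl⟩ := resolve heq hAA hn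
    have hs : sg1 hn S ^ n = sg2 hn S ^ (n-1) := by
      have h4 : sg2 hn S ^ (n-1) * sg2 hn S ^ (n-1) = 1 := by
        rw [← mul_pow, unit_sg2 hn S hsp hund, one_pow]
      linear_combination (sg2 hn S ^ (n-1)) * hκ + (-(sg1 hn S ^ n)) * h4
    rw [pow_add, pow_add, pow_mul', pow_mul', hs]
    ring
  rcases le_total A' A with h | h
  · exact key A B A' B' heq h
  · exact (key A' B' A B heq.symm h).symm

include hsp hund in
lemma kappa (hnp : NonPowerful S) : sg1 hn S ^ n * sg2 hn S ^ (n-1) = -1 := by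
  obtain ⟨u, v, l, f, g, hf, hg, hne⟩ := hnp
  obtain ⟨A, B, e1, s1, _⟩ := walkInv hn S hsp hund l u v f hf
  obtain ⟨A', B', e2, s2, _⟩ := walkInv hn S hsp hund l u v g hg
  obtain ⟨p, hp⟩ : ∃ p, A * (n-1) = p := ⟨_, rfl⟩
  obtain ⟨q, hq⟩ : ∃ q, B * n = q := ⟨_, rfl⟩
  obtain ⟨p', hp'⟩ : ∃ p, A' * (n-1) = p := ⟨_, rfl⟩
  obtain ⟨q', hq'⟩ : ∃ q, B' * n = q := ⟨_, rfl⟩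
  rw [hp, hq] at e1; rw [hp', hq'] at e2
  have hAB : A * (n-1) + B * n = A' * (n-1) + B' * n := by rw [hp, hq, hp', hq']; omega
  have hXY : sg1 hn S ^ A * sg2 hn S ^ B ≠ sg1 hn S ^ A' * sg2 hn S ^ B' := by
    intro h
    apply hne
    rw [s1, s2]
    linear_combination (ee hn S u.val * ee hn S v.val) * h
  have hκκ : (sg1 hn S ^ n * sg2 hn S ^ (n-1)) * (sg1 hn S ^ n * sg2 hn S ^ (n-1)) = 1 := by
    calc (sg1 hn S ^ n * sg2 hn S ^ (n-1)) * (sg1 hn S ^ n * sg2 hn S ^ (n-1))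
        = (sg1 hn S * sg1 hn S) ^ n * (sg2 hn S * sg2 hn S) ^ (n-1) := by ring
      _ = 1 := by rw [unit_sg1 hn S hsp hund, unit_sg2 hn S hsp hund]; simp
  rcases Int.isUnit_iff.mp (IsUnit.of_mul_eq_one _ hκκ) with h1 | h1
  · exact absurd (signEq hn S hsp hund h1 hAB) hXY
  · exact h1

include hsp hund in
lemma sssd_char (hκ : sg1 hn S ^ n * sg2 hn S ^ (n-1) = -1) (u v : Fin n) (l : ℕ) :
    HasSSSD S u v l ↔
      ∃ A B : ℕ, l + u.val = v.val + A * (n-1) + B * n ∧ n ≤ A ∧ (u.val = n - 1 → 1 ≤ B) := by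
  constructor
  · rintro ⟨f, g, hf, hg, hne⟩
    have hl : 1 ≤ l := by
      by_contra h
      have : l = 0 := by omega
      subst this
      apply hne
      rw [walkSign, walkSign, Finset.prod_range_zero, Finset.prod_range_zero]
    obtain ⟨A, B, e1, s1, b1⟩ := walkInv hn S hsp hund l u v f hf
    obtain ⟨A', B', e2, s2, b2⟩ := walkInv hn S hsp hund l u v g hg
    have hAB : A * (n-1) + B * n = A' * (n-1) + B' * n := by
      obtain ⟨p, hp⟩ : ∃ p, A * (n-1) = p := ⟨_, rfl⟩
      obtain ⟨q, hq⟩ : ∃ q, B * n = q := ⟨_, rfl⟩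
      obtain ⟨p', hp'⟩ : ∃ p, A' * (n-1) = p := ⟨_, rfl⟩
      obtain ⟨q', hq'⟩ : ∃ q, B' * n = q := ⟨_, rfl⟩
      rw [hp, hq] at e1; rw [hp', hq'] at e2
      rw [hp, hq, hp', hq']; omega
    have hXY : sg1 hn S ^ A * sg2 hn S ^ B ≠ sg1 hn S ^ A' * sg2 hn S ^ B' := by
      intro h
      apply hne
      rw [s1, s2]
      linear_combination (ee hn S u.val * ee hn S v.val) * h
    have main : ∀ C D C' D' : ℕ, C * (n-1) + D * n = C' * (n-1) + D' * n → C' ≤ C →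
        sg1 hn S ^ C * sg2 hn S ^ D ≠ sg1 hn S ^ C' * sg2 hn S ^ D' → n ≤ C := by
      intro C D C' D' heq hle hne'
      obtain ⟨t, rfl, rfl⟩ := resolve heq hle hn
      rcases Nat.eq_zero_or_pos t with rfl | ht
      · simp at hne'
      · obtain ⟨w, hw⟩ : ∃ w, t * n = w := ⟨_, rfl⟩
        have h5 : n ≤ w := by rw [← hw]; exact Nat.le_mul_of_pos_left n ht
        rw [hw]
        omega
    rcases le_total A' A with hle | hle
    · exact ⟨A, B, e1, main A B A' B' hAB hle hXY, fun h => b1 h hl⟩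
    · exact ⟨A', B', e2, main A' B' A B hAB.symm hle (Ne.symm hXY), fun h => b2 h hl⟩
  · rintro ⟨A, B, heq, hA, hB⟩
    obtain ⟨a, rfl⟩ : ∃ a, A = n + a := ⟨A - n, by omega⟩
    obtain ⟨f, hf, hsf⟩ := construct hn S hsp hund ((n+a) + B) (n+a) B u v l rfl heq
      (fun hu _ => hB hu)
    have heq2 : l + u.val = v.val + a * (n-1) + (B + (n-1)) * n := by
      have : (n+a) * (n-1) + B * n = a * (n-1) + (B + (n-1)) * n := by ring
      omega
    obtain ⟨g, hg, hsg⟩ := construct hn S hsp hund (a + (B + (n-1))) a (B + (n-1)) u v l rfl heq2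
      (fun _ _ => by omega)
    refine ⟨f, g, hf, hg, ?_⟩
    rw [hsf, hsg]
    intro hcontra
    have hsq := sq_sign hn S hsp hund a (B + (n-1)) u v
    have hprod : (ee hn S u.val * ee hn S v.val * sg1 hn S ^ a * sg2 hn S ^ (B + (n-1))) *
        (ee hn S u.val * ee hn S v.val * sg1 hn S ^ (n+a) * sg2 hn S ^ B) = -1 := by
      have h1 : ee hn S u.val * ee hn S u.val = 1 := unit_ee hn S hsp hund (by omega)
      have h2 : ee hn S v.val * ee hn S v.val = 1 := unit_ee hn S hsp hund (by omega)
      calc (ee hn S u.val * ee hn S v.val * sg1 hn S ^ a * sg2 hn S ^ (B + (n-1))) *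
          (ee hn S u.val * ee hn S v.val * sg1 hn S ^ (n+a) * sg2 hn S ^ B)
          = (ee hn S u.val * ee hn S u.val) * (ee hn S v.val * ee hn S v.val) *
            (sg1 hn S * sg1 hn S) ^ a * (sg2 hn S * sg2 hn S) ^ B *
            (sg1 hn S ^ n * sg2 hn S ^ (n-1)) := by ring
        _ = -1 := by
            rw [h1, h2, unit_sg1 hn S hsp hund, unit_sg2 hn S hsp hund, hκ]; simp
    rw [hcontra] at hprod
    rw [hsq] at hprod
    norm_num at hprod

end Inv

end UB1
namespace UB1

variable {n : ℕ}

/-- Universal upper bound: for every `k`-subset `X` and every `v`, the value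
`P = (2n-k)(n-1)+1` admits a suitable representation from some `x ∈ X`. -/
lemma universal (hn : 2 ≤ n) {k : ℕ} (hk1 : 1 ≤ k) (hkn : k ≤ n)
    (X : Finset (Fin n)) (hX : X.card = k) (v : Fin n) :
    ∃ x ∈ X, ∃ A B : ℕ, (2*n - k)*(n-1) + 1 + x.val = v.val + A*(n-1) + B*n ∧
      n ≤ A ∧ (x.val = n-1 → 1 ≤ B) := by
  obtain ⟨K, hKd⟩ : ∃ K, 2*n - k = K := ⟨_, rfl⟩
  have hK2 : K + k = 2*n := by omega
  have hK2z : (K : ℤ) + k = 2*n := by exact_mod_cast hK2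
  simp only [hKd]
  have hvlt : v.val < n := v.isLt
  set vv := v.val with hvv
  set δ : Fin n → ℕ := fun x => if x.val = n-1 then n-1 else n-2-x.val with hδ
  have hinj : Function.Injective δ := by
    intro x y hxy
    simp only [hδ] at hxy
    apply Fin.ext
    have hx := x.isLt; have hy := y.isLt
    by_cases h1 : x.val = n-1 <;> by_cases h2 : y.val = n-1 <;>
      simp only [h1, h2, if_pos, if_neg, if_true, if_false] at hxy <;> omega
  have hgood : ∃ x ∈ X, (δ x + vv = 0) ∨ (k-1 ≤ δ x + vv ∧ δ x + vv ≤ n-1) ∨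
      (n-1+k ≤ δ x + vv ∧ δ x + vv ≤ 2*(n-1)) := by
    by_contra hcon
    push_neg at hcon
    have hbound : ∀ x ∈ X, δ x ≤ n-1 := by
      intro x _
      simp only [hδ]
      split <;> omega
    have hcard : (X.image δ).card = k := by
      rw [Finset.card_image_of_injective X hinj, hX]
    rcases le_or_gt (k-1) vv with hv1 | hv1
    · -- vv ≥ k-1 : all bad δ's lie in Icc (n-vv) (n+k-2-vv)
      have hsub : X.image δ ⊆ Finset.Icc (n-vv) (n+k-2-vv) := by
        intro d hd
        rw [Finset.mem_image] at hd
        obtain ⟨x, hxX, rfl⟩ := hd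
        have h1 := hcon x hxX
        have h2 := hbound x hxX
        rw [Finset.mem_Icc]
        omega
      have hc := Finset.card_le_card hsub
      rw [hcard, Nat.card_Icc] at hc
      omega
    · -- vv ≤ k-2
      have hsub : X.image δ ⊆ Finset.Icc (1-vv) (k-2-vv) ∪ Finset.Icc (n-vv) (n-1) := by
        intro d hd
        rw [Finset.mem_image] at hd
        obtain ⟨x, hxX, rfl⟩ := hd
        have h1 := hcon x hxX
        have h2 := hbound x hxX
        rw [Finset.mem_union, Finset.mem_Icc, Finset.mem_Icc]
        omega
      have hc := Finset.card_le_card hsub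
      have hc2 := Finset.card_union_le (Finset.Icc (1-vv) (k-2-vv)) (Finset.Icc (n-vv) (n-1))
      rw [hcard] at hc
      rw [Nat.card_Icc, Nat.card_Icc] at hc2
      omega
  obtain ⟨x, hxX, hgx⟩ := hgood
  refine ⟨x, hxX, ?_⟩
  by_cases hxn : x.val = n-1
  · have hdx : δ x = n-1 := by simp [hδ, hxn]
    rw [hdx] at hgx
    rcases hgx with h | h | h
    · omega
    · -- forces vv = 0
      have hv0 : vv = 0 := by omega
      refine ⟨n + (n-k), 1, ?_, by omega, fun _ => le_rfl⟩
      rw [hxn, hv0]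
      zify [hkn, show 1 ≤ n by omega]
      linear_combination ((n:ℤ)-1) * hK2z
    · -- vv ≥ k
      have hvk : k ≤ vv := by omega
      refine ⟨n + (vv - k), (n-1-vv) + 1, ?_, by omega, fun _ => by omega⟩
      rw [hxn]
      zify [hvk, show vv ≤ n-1 by omega, show 1 ≤ n by omega]
      linear_combination ((n:ℤ)-1) * hK2z
  · have hx2 : x.val ≤ n-2 := by have := x.isLt; omega
    have hdx : δ x = n-2-x.val := by simp [hδ, hxn]
    rw [hdx] at hgx
    rcases hgx with h | h | h
    · -- w = 0 : x = n-2, vv = 0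
      have hx3 : x.val = n-2 := by omega
      have hv0 : vv = 0 := by omega
      refine ⟨n + (n-k+1), 0, ?_, by omega, fun hh => absurd hh hxn⟩
      rw [hx3, hv0]
      zify [hkn, show 1 ≤ n by omega, show 2 ≤ n from hn]
      linear_combination ((n:ℤ)-1) * hK2z
    · -- k-1 ≤ w ≤ n-1
      refine ⟨n + (n-2-x.val+vv+1-k), n-1-(n-2-x.val+vv), ?_, by omega,
        fun hh => absurd hh hxn⟩
      zify [hx2, show k ≤ n-2-x.val+vv+1 by omega, show n-2-x.val+vv ≤ n-1 by omega,
        show 1 ≤ n by omega, show 2 ≤ n from hn]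
      linear_combination ((n:ℤ)-1) * hK2z
    · -- n-1+k ≤ w ≤ 2(n-1)
      refine ⟨n + (n-2-x.val+vv-(n-1)-k), 2*(n-1)-(n-2-x.val+vv), ?_, by omega,
        fun hh => absurd hh hxn⟩
      zify [hx2, show n-1 ≤ n-2-x.val+vv by omega, show k ≤ n-2-x.val+vv-(n-1) by omega,
        show n-2-x.val+vv ≤ 2*(n-1) by omega, show 1 ≤ n by omega, show 2 ≤ n from hn]
      linear_combination ((n:ℤ)-1) * hK2z

/-- Failure lemma: for every `p < P` there is a `v` not reachable appropriately from
any vertex of `X* = {x : n-k ≤ x}`. -/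
lemma failure (hn : 2 ≤ n) {k : ℕ} (hk1 : 1 ≤ k) (hkn : k ≤ n)
    {p : ℕ} (hp : p < (2*n - k)*(n-1) + 1) :
    ∃ v : Fin n, ∀ x : Fin n, n - k ≤ x.val →
      ¬∃ A B : ℕ, p + x.val = v.val + A*(n-1) + B*n ∧ n ≤ A ∧ (x.val = n-1 → 1 ≤ B) := by
  have hsplit : (2*n-k)*(n-1) = n*(n-1) + (n-k)*(n-1) := by
    rw [show 2*n-k = n + (n-k) by omega, add_mul]
  rcases le_or_gt p (n*(n-1)) with hple | hpgt
  · refine ⟨⟨n-1, by omega⟩, ?_⟩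
    rintro x hx ⟨A, B, heq, hA, hB⟩
    simp only at heq
    have h1 : n*(n-1) ≤ A*(n-1) := Nat.mul_le_mul_right _ hA
    obtain ⟨z1, hz1⟩ : ∃ z, A*(n-1) = z := ⟨_, rfl⟩
    obtain ⟨z2, hz2⟩ : ∃ z, B*n = z := ⟨_, rfl⟩
    obtain ⟨z3, hz3⟩ : ∃ z, n*(n-1) = z := ⟨_, rfl⟩
    rw [hz1, hz2] at heq
    rw [hz1, hz3] at h1
    rw [hz3] at hple
    rcases Nat.eq_or_lt_of_le (show x.val ≤ n-1 by have := x.isLt; omega) with hxe | hxlt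
    · have hB1 : 1 ≤ B := hB hxe
      have h2 : n ≤ B*n := Nat.le_mul_of_pos_left n hB1
      rw [hz2] at h2
      omega
    · omega
  · -- n(n-1) < p < n(n-1) + (n-k)(n-1) + 1
    obtain ⟨m, hm⟩ : ∃ m, p - n*(n-1) = m := ⟨_, rfl⟩
    obtain ⟨z3, hz3⟩ : ∃ z, n*(n-1) = z := ⟨_, rfl⟩
    obtain ⟨z4, hz4⟩ : ∃ z, (n-k)*(n-1) = z := ⟨_, rfl⟩
    have hm1 : 1 ≤ m := by omega
    have hm2 : m ≤ (n-k)*(n-1) := by rw [hz4]; omega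
    have hc1 : 1 ≤ n-1 := by omega
    set j := (m-1)/(n-1) with hj
    set r := (m-1)%(n-1) with hr
    have hrlt : r < n-1 := Nat.mod_lt _ (by omega)
    have hjm : (n-1) * j + r = m - 1 := Nat.div_add_mod (m-1) (n-1)
    have hjle : j < n-k := by
      rw [hj, Nat.div_lt_iff_lt_mul (by omega : 0 < n-1)]
      calc m - 1 < m := by omega
        _ ≤ (n-k)*(n-1) := hm2
    refine ⟨⟨r+1, by omega⟩, ?_⟩
    rintro x hx ⟨A, B, heq, hA, hB⟩
    simp only at heq
    have hxlt : x.val < n := x.isLt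
    -- rewrite p
    have hpe : p = n*(n-1) + ((n-1)*j + r + 1) := by rw [hjm]; omega
    have hBn : B * n = B*(n-1) + B := by
      calc B * n = B * ((n-1) + 1) := by congr 1; omega
        _ = B*(n-1) + B := by ring
    rw [hpe, hBn] at heq
    -- heq : n*(n-1) + ((n-1)*j + r + 1) + x.val = (r+1) + A*(n-1) + (B*(n-1) + B)
    have heq2 : n*(n-1) + (n-1)*j + x.val = (A+B)*(n-1) + B := by
      rw [add_mul]
      omega
    set Q := A + B with hQ
    rcases le_or_gt (n + j) Q with hge | hlt
    · obtain ⟨t, hte⟩ : ∃ t, Q = (n+j) + t := ⟨Q - (n+j), by omega⟩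
      have heq3 : x.val = t*(n-1) + B := by
        have : Q*(n-1) = n*(n-1) + (n-1)*j + t*(n-1) := by
          rw [hte]; ring
        omega
      rcases Nat.eq_zero_or_pos t with rfl | ht
      · -- t = 0 : B = x, A = n + j - x < n
        simp only [Nat.zero_mul, Nat.zero_add] at heq3
        omega
      · have hct : n-1 ≤ t*(n-1) := Nat.le_mul_of_pos_left (n-1) ht
        obtain ⟨z, hz⟩ : ∃ z, t*(n-1) = z := ⟨_, rfl⟩
        rw [hz] at heq3 hct
        have hxB : x.val = n-1 ∧ B = 0 := by omega
        have := hB hxB.1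
        omega
    · obtain ⟨t, hte⟩ : ∃ t, n + j = Q + t := ⟨n + j - Q, by omega⟩
      have ht : 1 ≤ t := by omega
      have heq3 : t*(n-1) + x.val = B := by
        have : n*(n-1) + (n-1)*j = Q*(n-1) + t*(n-1) := by
          rw [show Q*(n-1) + t*(n-1) = (Q+t)*(n-1) by ring, ← hte]; ring
        omega
      have hct : n-1 ≤ t*(n-1) := Nat.le_mul_of_pos_left (n-1) ht
      obtain ⟨z, hz⟩ : ∃ z, t*(n-1) = z := ⟨_, rfl⟩
      rw [hz] at heq3 hct
      omega

end UB1
/-- Theorem 3.1: if `S₁` is a primitive non-powerful signed digraph with underlying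
digraph `D₁`, then `L(S₁,k) = (2n-k)(n-1) + 1`. -/
theorem upperBase_D1 {n : ℕ} (hn : 2 ≤ n) (k : ℕ) (hk1 : 1 ≤ k) (hkn : k ≤ n)
    (S : Fin n → Fin n → ℤ) (hsp : SignPattern S)
    (hund : ∀ u v, Underlying S u v ↔ D1 n u v)
    (hprim : Primitive (Underlying S)) (hnp : NonPowerful S) :
    upperBase S k = (2 * n - k) * (n - 1) + 1 := by
  haveI : NeZero n := ⟨by omega⟩
  have hκ := UB1.kappa hn S hsp hund hnp
  set P := (2*n - k)*(n-1) + 1 with hP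
  have hchar : ∀ (u v : Fin n) (l : ℕ), HasSSSD S u v l ↔
      ∃ A B : ℕ, l + u.val = v.val + A * (n-1) + B * n ∧ n ≤ A ∧ (u.val = n - 1 → 1 ≤ B) :=
    fun u v l => UB1.sssd_char hn S hsp hund hκ u v l
  have hPmem : ∀ X : Finset (Fin n), X.card = k →
      P ∈ {p | ∀ v, ∃ x ∈ X, HasSSSD S x v p} := by
    intro X hXc v
    obtain ⟨x, hx, A, B, h1, h2, h3⟩ := UB1.universal hn hk1 hkn X hXc v
    exact ⟨x, hx, (hchar x v P).2 ⟨A, B, h1, h2, h3⟩⟩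
  have hbound : ∀ X : Finset (Fin n), X.card = k → setBase S X ≤ P := by
    intro X hXc
    exact Nat.sInf_le (hPmem X hXc)
  set Xs := Finset.univ.filter (fun x : Fin n => n - k ≤ x.val) with hXs
  have hXscard : Xs.card = k := by
    have he : Xs = Finset.Ici (⟨n-k, by omega⟩ : Fin n) := by
      ext x
      simp [hXs, Finset.mem_Ici, Fin.le_def]
    rw [he, Fin.card_Ici]
    simp only []
    omega
  have hXsbase : setBase S Xs = P := by
    apply le_antisymm
    · exact Nat.sInf_le (hPmem Xs hXscard)
    · apply le_csInf ⟨P, hPmem Xs hXscard⟩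
      intro q hq
      by_contra hqP
      push_neg at hqP
      obtain ⟨v, hv⟩ := UB1.failure hn hk1 hkn hqP
      obtain ⟨x, hxXs, hss⟩ := hq v
      have hxval : n - k ≤ x.val := by
        rw [hXs] at hxXs
        exact (Finset.mem_filter.mp hxXs).2
      exact hv x hxval ((hchar x v q).1 hss)
  have hgreat : IsGreatest {e | ∃ X : Finset (Fin n), X.card = k ∧ setBase S X = e} P :=
    ⟨⟨Xs, hXscard, hXsbase⟩, by rintro e ⟨X, hXc, rfl⟩; exact hbound X hXc⟩
  exact hgreat.csSup_eq
end
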